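/- Let P be a bounded idempotent operator on a Hilbert space H. Then the orthogonal projection onto the range of P equals PP*(1 + (P - P*)(P* - P))^{-1}. -/

import Mathlib

open scoped InnerProductSpace

/-- For a bounded idempotent `P` on a Hilbert space `H`, the operator
`Q = P P* (1 + (P-P*)(P*-P))⁻¹` is the orthogonal projection onto `ran P`: for every
`x`, `Q x ∈ ran P` and `x - Q x ⊥ ran P`. -/
theorem statement_8 {H : Type*} [NormedAddCommGroup H] [InnerProductSpace ℂ H]
    [CompleteSpace H] (P : H →L[ℂ] H) (hP : P * P = P)
    (Q : H →L[ℂ] H)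
    (hQ : Q = P * star P * Ring.inverse (1 + (P - star P) * (star P - P))) :
    ∀ x : H, Q x ∈ LinearMap.range (P : H →ₗ[ℂ] H) ∧
      ∀ y ∈ LinearMap.range (P : H →ₗ[ℂ] H), ⟪x - Q x, y⟫_ℂ = 0 := by
  set D : H →L[ℂ] H := 1 + (P - star P) * (star P - P) with hD
  have hD' : D = 1 + star (star P - P) * (star P - P) := by
    rw [hD]; congr 1; congr 1; simp [star_sub]
  have hDunit : IsUnit D := by
    rw [hD']
    exact CStarAlgebra.isUnit_of_le 1
      (le_add_of_nonneg_right (star_mul_self_nonneg _)) isStrictlyPositive_one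
  have hP' : star P * star P = star P := by
    rw [← star_mul, hP]
  -- star P * D = star P * P * star P
  have key : star P * D = star P * P * star P := by
    rw [hD]
    have : star P * (1 + (P - star P) * (star P - P)) =
        star P + (star P * P * star P - star P * (P * P) - star P * star P * star P
          + star P * star P * P) := by noncomm_ring
    rw [this, hP, hP', hP']
    abel
  have hPQ : star P * Q = star P := by
    rw [hQ]
    have h2 : star P * (P * star P * Ring.inverse D) = star P * P * star P * Ring.inverse D := by
      noncomm_ring
    rw [h2, ← key, mul_assoc, Ring.mul_inverse_cancel _ hDunit, mul_one]
  intro x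
  constructor
  · rw [hQ, mul_assoc]
    exact ⟨(star P * Ring.inverse D) x, rfl⟩
  · rintro y ⟨z, rfl⟩
    have hadj : star P (x - Q x) = 0 := by
      have := congrArg (fun T : H →L[ℂ] H => T x) hPQ
      simp only [ContinuousLinearMap.mul_apply] at this
      simp [map_sub, this]
    calc ⟪x - Q x, P z⟫_ℂ = ⟪(ContinuousLinearMap.adjoint P) (x - Q x), z⟫_ℂ :=
          (ContinuousLinearMap.adjoint_inner_left P _ _).symm
      _ = 0 := by rw [← ContinuousLinearMap.star_eq_adjoint, hadj, inner_zero_left]
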